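/- Let G be a finitely generated group with trivial centre, let π : Aut(G) → Out(G) be the natural quotient map, let H be a subgroup of Out(G), and let H̃ = π⁻¹(H) ≤ Aut(G). Suppose that: (1) there exists γ ∈ Inn(G) such that the centraliser of γ in Aut(G) is the cyclic subgroup ⟨γ⟩ generated by γ; and (2) H̃ is conjugacy separable. Then H is a separable subgroup of Out(G). -/

import Mathlib

section Preamble

variable (G : Type*) [Group G]

/-- The subgroup of inner automorphisms of `G`, i.e. the image of `G → Aut(G)`,
`x ↦ (g ↦ x * g * x⁻¹)`. -/
def Inn : Subgroup (MulAut G) := (MulAut.conj : G →* MulAut G).range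

instance Inn.normal : (Inn G).Normal := by
  constructor
  rintro _ ⟨g, rfl⟩ f
  refine ⟨f g, ?_⟩
  ext x
  simp [MulAut.conj, mul_assoc]

/-- The outer automorphism group of `G`: the quotient `Aut(G)/Inn(G)`. -/
def Out : Type _ := MulAut G ⧸ Inn G

instance : Group (Out G) := inferInstanceAs (Group (MulAut G ⧸ Inn G))

/-- The natural quotient map `π : Aut(G) → Out(G)`. -/
def outQuot : MulAut G →* Out G := QuotientGroup.mk' (Inn G)

/-- A subgroup `H ≤ K` is separable if every element of `K` outside of `H` can be
separated from `H` in a finite quotient of `K`. -/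
def Subgroup.SeparableSub {K : Type*} [Group K] (H : Subgroup K) : Prop :=
  ∀ g ∉ H, ∃ (Q : Type) (_ : Group Q) (_ : Finite Q) (q : K →* Q), q g ∉ H.map q

/-- A group `K` is conjugacy separable if any two non-conjugate elements remain
non-conjugate in some finite quotient. -/
def ConjugacySeparable (K : Type*) [Group K] : Prop :=
  ∀ g h : K, ¬ IsConj g h →
    ∃ (Q : Type) (_ : Group Q) (_ : Finite Q) (q : K →* Q),
      Function.Surjective q ∧ ¬ IsConj (q g) (q h)

end Preamble

section Aux

variable {G : Type*} [Group G]

lemma finite_monoidHom_aux (Q : Type*) [Group Q] [Finite Q] [Group.FG G] :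
    Finite (G →* Q) := by
  obtain ⟨S, hS, hSfin⟩ := Group.fg_iff.mp ‹Group.FG G›
  haveI : Finite S := hSfin
  refine Finite.of_injective (fun f : G →* Q => (fun s : S => f s)) ?_
  intro f g h
  refine MonoidHom.eq_of_eqOn_dense hS ?_
  intro x hx
  exact congrFun h ⟨x, hx⟩

lemma conj_aut_aux (α : MulAut G) (x : G) :
    α * MulAut.conj x * α⁻¹ = MulAut.conj (α x) := by
  ext y
  simp [MulAut.conj, mul_assoc]

def indAut (M : Subgroup G) [M.Normal] (hM : ∀ α : MulAut G, M.map (α : G ≃* G) = M) :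
    MulAut G →* MulAut (G ⧸ M) where
  toFun α := QuotientGroup.congr M M (α : G ≃* G) (hM α)
  map_one' := by
    ext x
    induction x using QuotientGroup.induction_on
    rfl
  map_mul' α β := by
    ext x
    induction x using QuotientGroup.induction_on
    rfl

lemma indAut_mk (M : Subgroup G) [M.Normal] (hM : ∀ α : MulAut G, M.map (α : G ≃* G) = M)
    (α : MulAut G) (x : G) :
    indAut M hM α (QuotientGroup.mk x) = QuotientGroup.mk (α x) := rfl

lemma indAut_conj (M : Subgroup G) [M.Normal] (hM : ∀ α : MulAut G, M.map (α : G ≃* G) = M)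
    (x : G) :
    indAut M hM (MulAut.conj x) = MulAut.conj (QuotientGroup.mk x : G ⧸ M) := by
  ext y
  induction y using QuotientGroup.induction_on
  simp [indAut_mk, MulAut.conj]

end Aux

/-- **Corollary.** Let `G` be a finitely generated group with trivial centre and
`H ≤ Out(G)`. If (1) there is `γ ∈ Inn(G)` whose centraliser in `Aut(G)` is `⟨γ⟩`, and
(2) `H̃ = π⁻¹(H)` is conjugacy separable, then `H` is a separable subgroup of `Out(G)`. -/
theorem statement1 (G : Type*) [Group G] [Group.FG G]
    (hZ : Subgroup.center G = ⊥)
    (H : Subgroup (Out G))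
    (h1 : ∃ γ ∈ Inn G, Subgroup.centralizer {γ} = Subgroup.zpowers γ)
    (h2 : ConjugacySeparable ↥(H.comap (outQuot G))) :
    H.SeparableSub := by
  obtain ⟨γ, hγInn, hγcent⟩ := h1
  intro g hg
  set H' : Subgroup (MulAut G) := H.comap (outQuot G) with hH'def
  obtain ⟨α, rfl⟩ := QuotientGroup.mk'_surjective (Inn G) g
  have hα : α ∉ H' := hg
  obtain ⟨c, hc⟩ := hγInn
  have hInnH' : Inn G ≤ H' := by
    intro x hx
    show outQuot G x ∈ H
    have : outQuot G x = 1 := (QuotientGroup.eq_one_iff x).mpr hx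
    rw [this]; exact H.one_mem
  have hγInn' : γ ∈ Inn G := ⟨c, hc⟩
  have hγH' : γ ∈ H' := hInnH' hγInn'
  have hαγInn : α * γ * α⁻¹ ∈ Inn G := (Inn.normal G).conj_mem γ hγInn' α
  have hαγ : α * γ * α⁻¹ ∈ H' := hInnH' hαγInn
  -- the two inner automorphisms `γ` and `αγα⁻¹` are non-conjugate in `H'`
  have hnc : ¬ IsConj (⟨γ, hγH'⟩ : H') ⟨α * γ * α⁻¹, hαγ⟩ := by
    rw [isConj_iff]
    rintro ⟨⟨β, hβ⟩, hconj⟩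
    have h : β * γ * β⁻¹ = α * γ * α⁻¹ := congrArg Subtype.val hconj
    have hcent : α⁻¹ * β ∈ Subgroup.centralizer ({γ} : Set (MulAut G)) := by
      rw [Subgroup.mem_centralizer_iff]
      intro y hy
      rw [Set.mem_singleton_iff] at hy
      rw [hy]
      calc γ * (α⁻¹ * β) = α⁻¹ * (α * γ * α⁻¹) * β := by group
        _ = α⁻¹ * (β * γ * β⁻¹) * β := by rw [h]
        _ = (α⁻¹ * β) * γ := by group
    rw [hγcent] at hcent
    obtain ⟨n, hn⟩ := hcent
    have hn' : γ ^ n = α⁻¹ * β := hn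
    apply hα
    have : α = β * (γ ^ n)⁻¹ := by rw [hn']; group
    rw [this]
    exact H'.mul_mem hβ (H'.inv_mem (H'.zpow_mem hγH' n))
  obtain ⟨Q₀, instQ₀, instQ₀f, q₀, hq₀surj, hq₀⟩ := h2 _ _ hnc
  clear hq₀surj
  -- the homomorphism `r : G →* Q₀`, `x ↦ q₀ (conj x)`
  have hconjH' : ∀ x : G, MulAut.conj x ∈ H' := fun x => hInnH' ⟨x, rfl⟩
  set r : G →* Q₀ :=
    MonoidHom.mk' (fun x : G => q₀ ⟨MulAut.conj x, hconjH' x⟩)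
      (fun a b => by
        have hab : (⟨MulAut.conj (a * b), hconjH' (a * b)⟩ : H')
            = ⟨MulAut.conj a, hconjH' a⟩ * ⟨MulAut.conj b, hconjH' b⟩ :=
          Subtype.ext (map_mul MulAut.conj a b)
        show q₀ ⟨MulAut.conj (a * b), hconjH' (a * b)⟩
            = q₀ ⟨MulAut.conj a, hconjH' a⟩ * q₀ ⟨MulAut.conj b, hconjH' b⟩
        rw [hab]
        exact map_mul q₀ _ _) with hrdef
  set P : Subgroup G := r.ker with hPdef
  haveI : P.FiniteIndex := Subgroup.finiteIndex_ker r
  haveI : Finite (G ⧸ P) := inferInstance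
  haveI : Finite (G →* Equiv.Perm (G ⧸ P)) := finite_monoidHom_aux _
  -- the finite-index characteristic subgroup `M ≤ P`
  set M : Subgroup G := ⨅ f : G →* Equiv.Perm (G ⧸ P), f.ker with hMdef
  have hMmem : ∀ {x : G}, x ∈ M ↔ ∀ f : G →* Equiv.Perm (G ⧸ P), x ∈ f.ker := by
    intro x; rw [hMdef, Subgroup.mem_iInf]
  have hMP : M ≤ P := by
    refine le_trans (iInf_le _ (MulAction.toPermHom G (G ⧸ P))) ?_
    rw [← Subgroup.normalCore_eq_ker]
    exact Subgroup.normalCore_le P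
  haveI hMfi : M.FiniteIndex := Subgroup.finiteIndex_iInf fun f => Subgroup.finiteIndex_ker f
  haveI hMnormal : M.Normal := by
    constructor
    intro m hm y
    rw [hMmem] at hm ⊢
    intro f
    exact (MonoidHom.normal_ker f).conj_mem m (hm f) y
  have hstep : ∀ (φ : MulAut G) (x : G), x ∈ M → φ x ∈ M := by
    intro φ x hx
    rw [hMmem] at hx ⊢
    intro f
    exact hx (f.comp φ.toMonoidHom)
  have hMchar : ∀ φ : MulAut G, M.map (φ : G ≃* G) = M := by
    intro φ
    apply le_antisymm
    · rintro _ ⟨y, hy, rfl⟩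
      exact hstep φ y hy
    · intro x hx
      exact ⟨φ⁻¹ x, hstep φ⁻¹ x hx, by simp⟩
  set Ψ : MulAut G →* MulAut (G ⧸ M) := indAut M hMchar with hΨdef
  haveI : Finite (G ⧸ M) := inferInstance
  haveI : Finite (MulAut (G ⧸ M)) :=
    Finite.of_injective (fun e : MulAut (G ⧸ M) => (e : G ⧸ M → G ⧸ M))
      fun e f h => by ext x; exact congrFun h x
  haveI : Finite (Out (G ⧸ M)) := Quotient.finite _
  -- the induced map `q' : Out G →* Out (G ⧸ M)`
  have hker : Inn G ≤ ((outQuot (G ⧸ M)).comp Ψ).ker := by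
    rintro _ ⟨x, rfl⟩
    show outQuot (G ⧸ M) (Ψ (MulAut.conj x)) = 1
    rw [hΨdef, indAut_conj M hMchar x]
    exact (QuotientGroup.eq_one_iff _).mpr ⟨QuotientGroup.mk x, rfl⟩
  set q' : Out G →* Out (G ⧸ M) :=
    QuotientGroup.lift (Inn G) ((outQuot (G ⧸ M)).comp Ψ) hker with hq'def
  -- shrink the target to `Type 0`
  haveI : Small.{0} (Out (G ⧸ M)) := Countable.toSmall _
  have e' : Shrink.{0} (Out (G ⧸ M)) ≃* Out (G ⧸ M) := Shrink.mulEquiv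
  refine ⟨Shrink.{0} (Out (G ⧸ M)), inferInstance, Finite.of_equiv _ (equivShrink _),
    e'.symm.toMonoidHom.comp q', ?_⟩
  intro hmem
  rw [Subgroup.mem_map] at hmem
  obtain ⟨y, hy, hqy⟩ := hmem
  obtain ⟨β, rfl⟩ := QuotientGroup.mk'_surjective (Inn G) y
  have hβ : β ∈ H' := hy
  have hq'eq : q' (QuotientGroup.mk' (Inn G) β) = q' (QuotientGroup.mk' (Inn G) α) := by
    apply e'.symm.injective
    exact hqy
  have hq'β : q' (QuotientGroup.mk' (Inn G) β) = outQuot (G ⧸ M) (Ψ β) := rfl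
  have hq'α : q' (QuotientGroup.mk' (Inn G) α) = outQuot (G ⧸ M) (Ψ α) := rfl
  rw [hq'β, hq'α] at hq'eq
  have hInnmem : (Ψ β)⁻¹ * Ψ α ∈ Inn (G ⧸ M) := by
    have h1 : outQuot (G ⧸ M) ((Ψ β)⁻¹ * Ψ α) = 1 := by
      rw [map_mul, map_inv, hq'eq, inv_mul_cancel]
    exact (QuotientGroup.eq_one_iff _).mp h1
  obtain ⟨xbar, hxbar⟩ := hInnmem
  obtain ⟨x, rfl⟩ := QuotientGroup.mk_surjective xbar
  -- hxbar : MulAut.conj (mk x) = (Ψ β)⁻¹ * Ψ α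
  set δ : MulAut G := β⁻¹ * α * (MulAut.conj x)⁻¹ with hδdef
  have hΨδ : Ψ δ = 1 := by
    rw [hδdef, map_mul, map_mul, map_inv, map_inv, hΨdef, indAut_conj M hMchar x, hxbar, ← hΨdef]
    group
  have hδc : c⁻¹ * δ c ∈ M := by
    have h3 : (Ψ δ) (QuotientGroup.mk c) = QuotientGroup.mk c := by rw [hΨδ]; rfl
    rw [hΨdef, indAut_mk] at h3
    exact QuotientGroup.eq.mp h3.symm
  set p : G := c⁻¹ * δ c with hpdef
  have hpP : p ∈ P := hMP hδc
  have hδcp : δ c = c * p := by rw [hpdef]; group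
  have hkey1 : δ * γ * δ⁻¹ = γ * MulAut.conj p := by
    rw [← hc, conj_aut_aux δ c, hδcp, map_mul]
  set β' : MulAut G := MulAut.conj (α x) * β with hβ'def
  have hβ'H : β' ∈ H' := H'.mul_mem (hInnH' ⟨α x, rfl⟩) hβ
  have hδ' : δ = β'⁻¹ * α := by
    rw [hδdef, hβ'def, ← conj_aut_aux α x]
    group
  have hkey : β'⁻¹ * (α * γ * α⁻¹) * β' = γ * MulAut.conj p := by
    rw [← hkey1, hδ']
    group
  have hkeyS : (⟨β', hβ'H⟩ : H')⁻¹ * ⟨α * γ * α⁻¹, hαγ⟩ * ⟨β', hβ'H⟩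
      = ⟨γ, hγH'⟩ * ⟨MulAut.conj p, hconjH' p⟩ :=
    Subtype.ext hkey
  have hq₀p : q₀ ⟨MulAut.conj p, hconjH' p⟩ = 1 := MonoidHom.mem_ker.mp hpP
  apply hq₀
  rw [isConj_iff]
  refine ⟨q₀ ⟨β', hβ'H⟩, ?_⟩
  have h4 := congrArg q₀ hkeyS
  simp only [map_mul, map_inv, hq₀p, mul_one] at h4
  rw [← h4]
  group
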